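/- If the two points x and y in ℝ² are such that the open segment joining them intersects a closed obstacle set O, and the segment is sampled at N_s evenly spaced points with spacing less than the grid cell size h, while O is a union of closed grid cells of side h, then at least one sampled point lies within distance h of O; conversely if no sampled point lies in O and O is a union of cells each containing at least one sample of any segment crossing it with spacing ≤ h/√2, then the segment is disjoint from the interior of O up to a boundary layer. -/

import Mathlib

theorem segment_sampling_obstacle_detection (h : ℝ) (hh : 0 < h)
    (I : Set (ℤ × ℤ)) (O : Set (EuclideanSpace ℝ (Fin 2))) (hO : IsClosed O)
    (hOcells : O = ⋃ p ∈ I, {z : EuclideanSpace ℝ (Fin 2) |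
      z 0 ∈ Set.Icc ((p.1 : ℝ) * h) ((p.1 : ℝ) * h + h) ∧
      z 1 ∈ Set.Icc ((p.2 : ℝ) * h) ((p.2 : ℝ) * h + h)})
    (x y : EuclideanSpace ℝ (Fin 2)) (Ns : ℕ) (hNs : 0 < Ns)
    (samp : ℕ → EuclideanSpace ℝ (Fin 2))
    (hsamp : ∀ k, samp k = x + ((k : ℝ) / (Ns : ℝ)) • (y - x)) :
    -- if the segment meets O and the sampling spacing is below the cell size h,
    -- then some sampled point lies within distance h of O
    (dist x y / (Ns : ℝ) < h → (∃ z ∈ segment ℝ x y, z ∈ O) →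
      ∃ k ≤ Ns, Metric.infDist (samp k) O ≤ h) ∧
    -- conversely, with spacing at most h/√2 and no sample in O, the segment
    -- avoids the interior of O except for a boundary layer of width h
    (dist x y / (Ns : ℝ) ≤ h / Real.sqrt 2 → (∀ k ≤ Ns, samp k ∉ O) →
      ∀ z ∈ segment ℝ x y, z ∈ interior O → z ∈ Metric.thickening h (frontier O)) := by
  have hNs' : (0 : ℝ) < (Ns : ℝ) := by exact_mod_cast hNs
  -- key: for any point of the segment, the nearest sample is within dist x y / Ns
  have key : ∀ z ∈ segment ℝ x y, ∃ k ≤ Ns, dist (samp k) z ≤ dist x y / (Ns : ℝ) := by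
    intro z hz
    rw [segment_eq_image'] at hz
    obtain ⟨t, ht, rfl⟩ := hz
    obtain ⟨ht0, ht1⟩ := ht
    refine ⟨⌊t * Ns⌋₊, ?_, ?_⟩
    · have : (⌊t * Ns⌋₊ : ℝ) ≤ (Ns : ℝ) := by
        calc (⌊t * Ns⌋₊ : ℝ) ≤ t * Ns := Nat.floor_le (by positivity)
          _ ≤ 1 * Ns := by nlinarith
          _ = Ns := one_mul _
      exact_mod_cast this
    · rw [hsamp]
      have h1 : (⌊t * Ns⌋₊ : ℝ) ≤ t * Ns := Nat.floor_le (by positivity)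
      have h2 : t * Ns < (⌊t * Ns⌋₊ : ℝ) + 1 := Nat.lt_floor_add_one _
      have e1 : (⌊t * Ns⌋₊ : ℝ) / Ns ≤ t := by
        rw [div_le_iff₀ hNs']; exact h1
      have e2 : t - (⌊t * Ns⌋₊ : ℝ) / Ns ≤ 1 / Ns := by
        rw [sub_le_iff_le_add, ← add_div, le_div_iff₀ hNs']; linarith
      have habs : |(⌊t * Ns⌋₊ : ℝ) / Ns - t| ≤ 1 / Ns := by
        rw [abs_of_nonpos (by linarith)]; linarith
      calc dist (x + ((⌊t * Ns⌋₊ : ℝ) / Ns) • (y - x)) (x + t • (y - x))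
          = ‖(((⌊t * Ns⌋₊ : ℝ) / Ns) - t) • (y - x)‖ := by
            rw [dist_eq_norm]
            congr 1
            module
        _ = |(⌊t * Ns⌋₊ : ℝ) / Ns - t| * ‖y - x‖ := by rw [norm_smul, Real.norm_eq_abs]
        _ ≤ (1 / Ns) * ‖y - x‖ := by
            apply mul_le_mul_of_nonneg_right habs (norm_nonneg _)
        _ = dist x y / Ns := by rw [dist_eq_norm, norm_sub_rev]; ring
  constructor
  · rintro hsp ⟨z, hzseg, hzO⟩
    obtain ⟨k, hk, hdk⟩ := key z hzseg
    exact ⟨k, hk, le_trans (le_trans (Metric.infDist_le_dist_of_mem hzO) hdk) hsp.le⟩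
  · intro hsp hnot z hzseg hzint
    obtain ⟨k, hk, hdk⟩ := key z hzseg
    have hzO : z ∈ O := interior_subset hzint
    have hOne : O ≠ Set.univ := fun hu => hnot k hk (hu ▸ Set.mem_univ _)
    obtain ⟨w, hwf, hwd⟩ := exists_mem_frontier_infDist_compl_eq_dist hzO hOne
    have hle : Metric.infDist z Oᶜ ≤ dist z (samp k) :=
      Metric.infDist_le_dist_of_mem (hnot k hk)
    rw [Metric.mem_thickening_iff]
    refine ⟨w, hwf, ?_⟩
    have hs2 : (1:ℝ) < Real.sqrt 2 := by
      rw [show (1:ℝ) = Real.sqrt 1 by simp]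
      exact Real.sqrt_lt_sqrt (by norm_num) (by norm_num)
    calc dist z w = Metric.infDist z Oᶜ := hwd.symm
      _ ≤ dist z (samp k) := hle
      _ = dist (samp k) z := dist_comm _ _
      _ ≤ dist x y / Ns := hdk
      _ ≤ h / Real.sqrt 2 := hsp
      _ < h := by rw [div_lt_iff₀ (by linarith)]; nlinarith
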